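/- arXiv:1803.06439 — 2 statements merged into one kernel-verified Lean document; each statement's English description precedes it below -/
import Mathlib

section
/- Let V(x1,x2) = (x1^2+x2^2)/2 + x1^2*x2 - x2^3/3 and fix a real number E with 0 < E < 1/6. Define G_E(x1,x2) = 2*(E - V)*(1 - 4*x1^2 - 4*x2^2) + (1 - 6*V)*(x1^2 + x2^2). Then for every (x1,x2) in R^2 satisfying x1^2 + x2^2 < 1 and V(x1,x2) < E, one has G_E(x1,x2) > 0. -/
noncomputable def henonV (x1 x2 : ℝ) : ℝ :=
  (x1^2 + x2^2)/2 + x1^2*x2 - x2^3/3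

noncomputable def henonG (E x1 x2 : ℝ) : ℝ :=
  2*(E - henonV x1 x2)*(1 - 4*x1^2 - 4*x2^2) + (1 - 6*henonV x1 x2)*(x1^2 + x2^2)

theorem stmt_1 (E : ℝ) (hE0 : 0 < E) (hE : E < 1/6)
    (x1 x2 : ℝ) (hdisk : x1^2 + x2^2 < 1) (hV : henonV x1 x2 < E) :
    0 < henonG E x1 x2 := by
  unfold henonG
  have h1 : 0 < (E - henonV x1 x2) * (2 - 2*(x1^2 + x2^2)) := by
    apply mul_pos (by linarith) (by linarith)
  have h2 : 0 ≤ (x1^2 + x2^2) * (1 - 6*E) := by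
    apply mul_nonneg (by positivity) (by linarith)
  nlinarith [h1, h2]
end

section
/- Let Q : C → C be a polynomial of degree d ≥ 2 and let w1 ≠ w2 be complex numbers. It is impossible that every root of Q(z) - w1 has multiplicity ≥ 2 and simultaneously every root of Q(z) - w2 has multiplicity ≥ 2. -/
open Polynomial

private lemma sum_count_le {α : Type*} [DecidableEq α] (S : Finset α) (R : Multiset α) :
    ∑ z ∈ S, R.count z ≤ Multiset.card R := by
  classical
  have h1 : ∑ z ∈ S, R.count z = ∑ z ∈ S ∩ R.toFinset, R.count z := by
    refine (Finset.sum_subset (Finset.inter_subset_left) ?_).symm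
    intro x hx hx2
    have : x ∉ R.toFinset := fun h => hx2 (Finset.mem_inter.2 ⟨hx, h⟩)
    simpa [Multiset.count_eq_zero] using fun h => this (Multiset.mem_toFinset.2 h)
  rw [h1, ← Multiset.toFinset_sum_count_eq R]
  exact Finset.sum_le_sum_of_subset Finset.inter_subset_right

theorem stmt_6 (Q : Polynomial ℂ) (d : ℕ) (w1 w2 : ℂ)
    (hdeg : Q.natDegree = d) (hd : 2 ≤ d) (hne : w1 ≠ w2) :
    ¬ ((∀ z : ℂ, (Q - C w1).IsRoot z → 2 ≤ (Q - C w1).rootMultiplicity z)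
      ∧ (∀ z : ℂ, (Q - C w2).IsRoot z → 2 ≤ (Q - C w2).rootMultiplicity z)) := by
  classical
  rintro ⟨h1, h2⟩
  set R := (derivative Q).roots with hR
  have hQ' : derivative Q ≠ 0 := by
    intro h
    have := Polynomial.natDegree_eq_zero_of_derivative_eq_zero h
    omega
  -- general per-polynomial bound
  have key : ∀ w : ℂ, (∀ z : ℂ, (Q - C w).IsRoot z → 2 ≤ (Q - C w).rootMultiplicity z) →
      d ≤ 2 * ∑ z ∈ (Q - C w).roots.toFinset, R.count z := by
    intro w hw
    have hP : (Q - C w) ≠ 0 := by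
      intro h
      have : (Q - C w).natDegree = d := by rw [natDegree_sub_C, hdeg]
      rw [h] at this
      simp at this; omega
    have hcard : Multiset.card (Q - C w).roots = d := by
      have := (Polynomial.splits_iff_card_roots).1 (IsAlgClosed.splits (Q - C w))
      rwa [natDegree_sub_C, hdeg] at this
    have hsum : ∑ z ∈ (Q - C w).roots.toFinset, (Q - C w).rootMultiplicity z = d := by
      rw [← hcard, ← Multiset.toFinset_sum_count_eq (Q - C w).roots]
      exact Finset.sum_congr rfl fun z _ => by rw [count_roots]
    calc d = ∑ z ∈ (Q - C w).roots.toFinset, (Q - C w).rootMultiplicity z := hsum.symm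
      _ ≤ ∑ z ∈ (Q - C w).roots.toFinset, 2 * R.count z := by
          refine Finset.sum_le_sum fun z hz => ?_
          have hroot : (Q - C w).IsRoot z := isRoot_of_mem_roots (Multiset.mem_toFinset.1 hz)
          have hm := hw z hroot
          have hder : (derivative (Q - C w)).rootMultiplicity z
              = (Q - C w).rootMultiplicity z - 1 :=
            derivative_rootMultiplicity_of_root hroot
          have hderQ : derivative (Q - C w) = derivative Q := by
            simp
          have : R.count z = (Q - C w).rootMultiplicity z - 1 := by
            rw [hR, count_roots, ← hderQ, hder]
          omega
      _ = 2 * ∑ z ∈ (Q - C w).roots.toFinset, R.count z := by rw [Finset.mul_sum]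
  have k1 := key w1 h1
  have k2 := key w2 h2
  have hdisj : Disjoint (Q - C w1).roots.toFinset (Q - C w2).roots.toFinset := by
    rw [Finset.disjoint_left]
    intro z hz1 hz2
    have e1 : Q.eval z - w1 = 0 := by
      simpa using isRoot_of_mem_roots (Multiset.mem_toFinset.1 hz1)
    have e2 : Q.eval z - w2 = 0 := by
      simpa using isRoot_of_mem_roots (Multiset.mem_toFinset.1 hz2)
    exact hne (by linear_combination e2 - e1)
  have hunion : ∑ z ∈ (Q - C w1).roots.toFinset, R.count z
      + ∑ z ∈ (Q - C w2).roots.toFinset, R.count z ≤ Multiset.card R := by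
    rw [← Finset.sum_union hdisj]
    exact sum_count_le _ _
  have hRcard : Multiset.card R ≤ d - 1 := by
    calc Multiset.card R ≤ (derivative Q).natDegree := card_roots' _
      _ ≤ Q.natDegree - 1 := natDegree_derivative_le _
      _ = d - 1 := by rw [hdeg]
  omega
end
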